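/- Suppose Y is Hausdorff. For the Williams relation ∼ on (Z∞ × Y) × 𝕋 associated to the ℤ-action on Z∞ × Y: for all m, n ∈ ℤ, φ, ψ ∈ Y, and z, w ∈ 𝕋, one has ((m, φ), z) ∼ ((n, ψ), w) if and only if φ = ψ; moreover ((m, φ), z) ∼ ((∞, ψ), w) never holds. -/
import Mathlib


open Filter Topology

/-- The order topology on `Z∞ = ℤ ∪ {∞}` (formally `WithTop ℤ`): every `n ∈ ℤ` is isolated,
and the sets `J_n = {k : ℤ | n ≤ k} ∪ {∞}` form a neighborhood basis at `∞`. -/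
noncomputable instance : TopologicalSpace (WithTop ℤ) := Preorder.topology (WithTop ℤ)

instance : OrderTopology (WithTop ℤ) := ⟨rfl⟩

/-- The integer power `σⁿ` (`n : ℤ`) of a homeomorphism `σ : Y ≃ₜ Y`, as a function. -/
def sigmaPow {Y : Type*} [TopologicalSpace Y] (σ : Y ≃ₜ Y) (n : ℤ) : Y → Y :=
  fun y => (σ.toEquiv ^ n) y

/-- The action of `ℤ` on `Z∞ × Y`: `n·(m, y) = (m + n, y)` for `m ∈ ℤ`, and
`n·(∞, y) = (∞, σⁿ(y))`. -/
def actZ {Y : Type*} [TopologicalSpace Y] (σ : Y ≃ₜ Y) (n : ℤ) (p : WithTop ℤ × Y) :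
    WithTop ℤ × Y :=
  (p.1.map (· + n), if p.1 = ⊤ then sigmaPow σ n p.2 else p.2)

/-- The Williams relation on `X × 𝕋` associated to an action `act` of `ℤ` on a topological
space `X`: `(x, z) ∼ (y, w)` iff the closures of the `ℤ`-orbits of `x` and `y` coincide and
`zⁿ = wⁿ` for all `n` in the stability group of `x`. -/
def williams {X : Type*} [TopologicalSpace X] (act : ℤ → X → X)
    (p q : X × Circle) : Prop :=
  closure (Set.range fun n : ℤ => act n p.1) = closure (Set.range fun n : ℤ => act n q.1) ∧
  ∀ n : ℤ, act n p.1 = p.1 → p.2 ^ n = q.2 ^ n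

/-- For Hausdorff `Y`: `((m, φ), z) ∼ ((n, ψ), w)` iff `φ = ψ`, and
`((m, φ), z) ∼ ((∞, ψ), w)` never holds. -/
lemma closure_range_coe : closure (Set.range ((↑) : ℤ → WithTop ℤ)) = Set.univ := by
  refine Set.eq_univ_iff_forall.2 fun x => ?_
  cases x with
  | top =>
    rw [mem_closure_iff_nhds_basis nhds_top_basis]
    rintro (a | a) ha
    · exact absurd rfl ha.ne
    · exact ⟨(a + 1 : ℤ), ⟨a + 1, rfl⟩, WithTop.coe_lt_coe.2 (lt_add_one a)⟩
  | coe n => exact subset_closure ⟨n, rfl⟩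

lemma actZ_coe {Y : Type*} [TopologicalSpace Y] (σ : Y ≃ₜ Y) (n m : ℤ) (φ : Y) :
    actZ σ n ((m : WithTop ℤ), φ) = (((m + n : ℤ) : WithTop ℤ), φ) := by
  simp [actZ, WithTop.map_coe]

lemma range_actZ_coe {Y : Type*} [TopologicalSpace Y] (σ : Y ≃ₜ Y) (m : ℤ) (φ : Y) :
    (Set.range fun n : ℤ => actZ σ n ((m : WithTop ℤ), φ)) =
      (Set.range ((↑) : ℤ → WithTop ℤ)) ×ˢ {φ} := by
  ext ⟨x, y⟩
  simp only [actZ_coe, Set.mem_range, Set.mem_prod, Set.mem_singleton_iff, Prod.mk.injEq]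
  constructor
  · rintro ⟨n, h1, h2⟩; exact ⟨⟨m + n, h1⟩, h2.symm⟩
  · rintro ⟨⟨k, hk⟩, rfl⟩; exact ⟨k - m, by rw [← hk]; norm_num, rfl⟩

lemma closure_orbit_coe {Y : Type*} [TopologicalSpace Y] [T2Space Y] (σ : Y ≃ₜ Y)
    (m : ℤ) (φ : Y) :
    closure (Set.range fun n : ℤ => actZ σ n ((m : WithTop ℤ), φ)) =
      (Set.univ : Set (WithTop ℤ)) ×ˢ {φ} := by
  rw [range_actZ_coe, closure_prod_eq, closure_range_coe, closure_singleton]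

theorem williams_actZ_int {Y : Type*} [TopologicalSpace Y] [T2Space Y] (σ : Y ≃ₜ Y) :
    (∀ (m n : ℤ) (φ ψ : Y) (z w : Circle),
      williams (actZ σ) (((m : WithTop ℤ), φ), z) (((n : WithTop ℤ), ψ), w) ↔ φ = ψ) ∧
    (∀ (m : ℤ) (φ ψ : Y) (z w : Circle),
      ¬ williams (actZ σ) (((m : WithTop ℤ), φ), z) (((⊤ : WithTop ℤ), ψ), w)) := by
  constructor
  · intro m n φ ψ z w
    constructor
    · rintro ⟨hcl, -⟩
      rw [closure_orbit_coe, closure_orbit_coe] at hcl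
      have : ((0 : WithTop ℤ), φ) ∈ (Set.univ : Set (WithTop ℤ)) ×ˢ {ψ} := by
        rw [← hcl]; exact ⟨Set.mem_univ _, rfl⟩
      exact this.2
    · rintro rfl
      refine ⟨by rw [closure_orbit_coe, closure_orbit_coe], fun k hk => ?_⟩
      have h1 : ((m + k : ℤ) : WithTop ℤ) = (m : WithTop ℤ) := by
        have := congrArg Prod.fst hk
        simpa [actZ_coe] using this
      have hk0 : k = 0 := by
        have := WithTop.coe_injective h1
        omega
      simp [hk0]
  · rintro m φ ψ z w ⟨hcl, -⟩
    rw [closure_orbit_coe] at hcl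
    have hmem : ((m : WithTop ℤ), φ) ∈
        closure (Set.range fun n : ℤ => actZ σ n ((⊤ : WithTop ℤ), ψ)) := by
      rw [← hcl]; exact ⟨Set.mem_univ _, rfl⟩
    have hsub : closure (Set.range fun n : ℤ => actZ σ n ((⊤ : WithTop ℤ), ψ)) ⊆
        ({⊤} : Set (WithTop ℤ)) ×ˢ Set.univ := by
      refine closure_minimal ?_ (IsClosed.prod (by rw [← Set.Ici_top]; exact isClosed_Ici)
        isClosed_univ)
      rintro p ⟨k, rfl⟩
      exact ⟨rfl, Set.mem_univ _⟩
    exact WithTop.coe_ne_top (hsub hmem).1
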